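/- Let p, q ∈ L¹([0, π]; ℝ) be real-valued, let λ, t ∈ ℝ, and let h = (h₁, h₂) : [0, π] → ℝ² be absolutely continuous with B h′ + Ω h = λ h almost everywhere and ∫₀^π (h₁² + h₂²) dx = 1. Define θ(x) = 1 + (e^t − 1) ∫₀ˣ (h₁(s)² + h₂(s)²) ds, Ω_t(x) = Ω(x) + ((e^t − 1)/θ(x)) · (B h(x) h(x)^T − h(x) h(x)^T B), and h̃(x) = (e^{t/2}/θ(x)) h(x). Then: (a) θ(x) ≥ min(1, e^t) > 0 for all x ∈ [0, π]; (b) Ω_t(x) − Ω(x) = σ₂·Δp(x) + σ₃·Δq(x) with Δp = ((e^t − 1)/θ)·2 h₁ h₂ and Δq = ((e^t − 1)/θ)·(h₂² − h₁²), so Ω_t is again a canonical potential matrix; (c) h̃ is absolutely continuous and B h̃′ + Ω_t h̃ = λ h̃ almost everywhere; (d) ∫₀^π (h̃₁² + h̃₂²) dx = 1; (e) ∫₀^π ‖Ω_t(x) − Ω(x)‖ dx = |t|. -/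

import Mathlib

open MeasureTheory Filter Set

set_option maxHeartbeats 2000000

section Aux

variable {E : Type*} [NormedAddCommGroup E] [NormedSpace ℝ E] [CompleteSpace E]

omit [CompleteSpace E] in
lemma aux_smul_integrableOn {x : ℝ} {c : ℝ → ℝ} {f : ℝ → E}
    (hc : ContinuousOn c (Icc 0 x)) (hf : IntegrableOn f (Ioc 0 x)) :
    IntegrableOn (fun s => c s • f s) (Ioc 0 x) := by
  obtain ⟨C, hC⟩ := (isCompact_Icc (a := (0:ℝ)) (b := x)).exists_bound_of_continuousOn hc
  refine Integrable.mono' (hf.norm.const_mul C) ?_ ?_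
  · exact (((hc.mono Ioc_subset_Icc_self).aestronglyMeasurable measurableSet_Ioc).smul hf.1)
  · refine (ae_restrict_iff' measurableSet_Ioc).2 (.of_forall fun s hs => ?_)
    rw [norm_smul]
    exact mul_le_mul_of_nonneg_right (hC s (Ioc_subset_Icc_self hs)) (norm_nonneg _)

lemma aux_parts_primitive {x : ℝ} (hx : 0 ≤ x) {f : ℝ → E} (hf : IntegrableOn f (Icc 0 x))
    {c c' : ℝ → ℝ} (hc : ∀ s ∈ Icc 0 x, HasDerivAt c (c' s) s)
    (hc' : ContinuousOn c' (Icc 0 x))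
    (H : ℝ → E) (hHdef : ∀ s, H s = ∫ u in (0:ℝ)..s, f u) :
    ∫ s in (0:ℝ)..x, (c' s • H s + c s • f s) = c x • H x := by
  have hfI : IntegrableOn f (Ioc 0 x) := hf.mono_set Ioc_subset_Icc_self
  have hccont : ContinuousOn c (Icc 0 x) := fun s hs => (hc s hs).continuousAt.continuousWithinAt
  have hHcont : ContinuousOn H (Icc 0 x) := by
    have h2 := intervalIntegral.continuousOn_primitive_interval (a := (0:ℝ)) (b := x) (f := f)
      (by rw [uIcc_of_le hx]; exact hf)
    rw [uIcc_of_le hx] at h2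
    exact h2.congr fun s _ => hHdef s
  have hc'H : IntegrableOn (fun s => c' s • H s) (Ioc 0 x) :=
    ((hc'.smul hHcont).integrableOn_compact isCompact_Icc).mono_set Ioc_subset_Icc_self
  have hcf : IntegrableOn (fun s => c s • f s) (Ioc 0 x) := aux_smul_integrableOn hccont hfI
  have hc'int : IntegrableOn c' (Ioc 0 x) :=
    (hc'.integrableOn_compact isCompact_Icc).mono_set Ioc_subset_Icc_self
  set μ := volume.restrict (Ioc (0:ℝ) x) with hμ
  set F : ℝ → ℝ → E := fun s v =>
    ({p : ℝ × ℝ | p.2 ≤ p.1}.indicator (fun p => c' p.1 • f p.2)) (s, v) with hF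
  have hFint : Integrable (Function.uncurry F) (μ.prod μ) :=
    Integrable.indicator (hc'int.smul_prod hfI) (measurableSet_le measurable_snd measurable_fst)
  have key1 : ∀ s ∈ Ioc (0:ℝ) x, c' s • H s = ∫ v, F s v ∂μ := by
    intro s hs
    have h3 : (fun v => F s v) = (Iic s).indicator (fun v => c' s • f v) := by
      funext v
      simp only [hF, Set.indicator_apply, mem_setOf_eq, mem_Iic]
    rw [h3, hμ, integral_indicator measurableSet_Iic, Measure.restrict_restrict measurableSet_Iic]
    have hset : Iic s ∩ Ioc 0 x = Ioc 0 s := by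
      ext v; simp only [mem_inter_iff, mem_Iic, mem_Ioc]
      exact ⟨fun ⟨h1, h2, _⟩ => ⟨h2, h1⟩, fun ⟨h1, h2⟩ => ⟨h2, h1, h2.trans hs.2⟩⟩
    rw [hset, integral_smul, hHdef s, intervalIntegral.integral_of_le hs.1.le]
  have key2 : ∀ v ∈ Ioc (0:ℝ) x, (∫ s, F s v ∂μ) = (c x - c v) • f v := by
    intro v hv
    have h3 : (fun s => F s v) = (Ici v).indicator (fun s => c' s • f v) := by
      funext s
      simp only [hF, Set.indicator_apply, mem_setOf_eq, mem_Ici]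
    rw [h3, hμ, integral_indicator measurableSet_Ici, Measure.restrict_restrict measurableSet_Ici]
    have hset : Ici v ∩ Ioc 0 x = Icc v x := by
      ext s; simp only [mem_inter_iff, mem_Ici, mem_Icc, mem_Ioc]
      exact ⟨fun ⟨h1, _, h3⟩ => ⟨h1, h3⟩, fun ⟨h1, h2⟩ => ⟨h1, lt_of_lt_of_le hv.1 h1, h2⟩⟩
    rw [hset, integral_smul_const, integral_Icc_eq_integral_Ioc,
      ← intervalIntegral.integral_of_le hv.2]
    congr 1
    refine intervalIntegral.integral_eq_sub_of_hasDerivAt (fun s hs => ?_) ?_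
    · rw [uIcc_of_le hv.2] at hs
      exact hc s ⟨hv.1.le.trans hs.1, hs.2⟩
    · refine ContinuousOn.intervalIntegrable (hc'.mono ?_)
      rw [uIcc_of_le hv.2]
      exact Icc_subset_Icc hv.1.le le_rfl
  have swap : ∫ s, c' s • H s ∂μ = ∫ v, (c x - c v) • f v ∂μ := by
    rw [setIntegral_congr_fun measurableSet_Ioc key1, integral_integral_swap hFint]
    exact setIntegral_congr_fun measurableSet_Ioc key2
  have expand : ∫ v, (c x - c v) • f v ∂μ = c x • (∫ v, f v ∂μ) - ∫ v, c v • f v ∂μ := by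
    have h1 : Integrable (fun v => c x • f v) μ := hfI.smul (c x)
    simp_rw [sub_smul]
    rw [integral_sub h1 hcf, integral_smul]
  rw [intervalIntegral.integral_of_le hx, integral_add hc'H hcf]
  show (∫ s, c' s • H s ∂μ) + (∫ s, c s • f s ∂μ) = c x • H x
  rw [swap, expand, hHdef x, intervalIntegral.integral_of_le hx]
  show c x • (∫ v, f v ∂μ) - (∫ v, c v • f v ∂μ) + (∫ s, c s • f s ∂μ) = c x • (∫ v, f v ∂μ)
  abel

end Aux

lemma aux_opnorm_special (a b : ℝ) :
    ‖Matrix.toEuclideanCLM (𝕜 := ℝ) !![a, b; b, -a]‖ = Real.sqrt (a ^ 2 + b ^ 2) := by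
  set T := Matrix.toEuclideanCLM (𝕜 := ℝ) !![a, b; b, -a] with hT
  have key : ∀ v : EuclideanSpace ℝ (Fin 2), ‖T v‖ = Real.sqrt (a ^ 2 + b ^ 2) * ‖v‖ := by
    intro v
    have h0 : (T v) 0 = a * v 0 + b * v 1 := by
      have h2 := Matrix.ofLp_toEuclideanCLM (𝕜 := ℝ) !![a, b; b, -a] v
      have h1 : (WithLp.ofLp (T v)) 0 = (T v) 0 := rfl
      rw [← h1, h2]
      simp [Matrix.toLin'_apply, Matrix.mulVec, dotProduct, Fin.sum_univ_two]
    have h1 : (T v) 1 = b * v 0 + - a * v 1 := by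
      have h2 := Matrix.ofLp_toEuclideanCLM (𝕜 := ℝ) !![a, b; b, -a] v
      have h1 : (WithLp.ofLp (T v)) 1 = (T v) 1 := rfl
      rw [← h1, h2]
      simp [Matrix.toLin'_apply, Matrix.mulVec, dotProduct, Fin.sum_univ_two]
    rw [EuclideanSpace.norm_eq, EuclideanSpace.norm_eq]
    simp only [Fin.sum_univ_two, Real.norm_eq_abs, sq_abs, h0, h1]
    rw [← Real.sqrt_mul (by positivity)]
    congr 1
    ring
  refine le_antisymm (ContinuousLinearMap.opNorm_le_bound _ (Real.sqrt_nonneg _)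
    (fun v => le_of_eq (key v))) ?_
  have hv : ‖(EuclideanSpace.single 0 (1:ℝ) : EuclideanSpace ℝ (Fin 2))‖ = 1 := by
    simp [EuclideanSpace.norm_single]
  calc Real.sqrt (a ^ 2 + b ^ 2)
      = ‖T (EuclideanSpace.single 0 (1:ℝ))‖ := by rw [key, hv, mul_one]
    _ ≤ ‖T‖ * ‖(EuclideanSpace.single 0 (1:ℝ) : EuclideanSpace ℝ (Fin 2))‖ :=
        T.le_opNorm _
    _ = ‖T‖ := by rw [hv, mul_one]

noncomputable section

/-- The matrix `B` with rows `(0, 1)` and `(-1, 0)`. -/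
def BmatR : Matrix (Fin 2) (Fin 2) ℝ := !![0, 1; -1, 0]

/-- The Pauli-type matrix `σ₂` with rows `(1, 0)` and `(0, -1)`. -/
def sigma2R : Matrix (Fin 2) (Fin 2) ℝ := !![1, 0; 0, -1]

/-- The Pauli-type matrix `σ₃` with rows `(0, 1)` and `(1, 0)`. -/
def sigma3R : Matrix (Fin 2) (Fin 2) ℝ := !![0, 1; 1, 0]

/-- The potential matrix `Ω(x) = σ₂·p(x) + σ₃·q(x)`. -/
def OmegaR (p q : ℝ → ℝ) (x : ℝ) : Matrix (Fin 2) (Fin 2) ℝ := !![p x, q x; q x, -p x]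

/-- The operator norm of a `2 × 2` real matrix, i.e. the square root of the largest
eigenvalue of `A* A`; for `a•σ₂ + b•σ₃` it equals `√(a² + b²)`. -/
def matNormR (M : Matrix (Fin 2) (Fin 2) ℝ) : ℝ := ‖Matrix.toEuclideanCLM (𝕜 := ℝ) M‖

/-- `θ(x) = 1 + (eᵗ - 1) ∫₀ˣ |h|²`. -/
def theta (t : ℝ) (h : ℝ → Fin 2 → ℝ) (x : ℝ) : ℝ :=
  1 + (Real.exp t - 1) * ∫ s in (0:ℝ)..x, ((h s 0) ^ 2 + (h s 1) ^ 2)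

/-- The perturbed potential
`Ω_t(x) = Ω(x) + ((eᵗ-1)/θ(x))·(B h hᵀ - h hᵀ B)`. -/
def OmegaPert (p q : ℝ → ℝ) (t : ℝ) (h : ℝ → Fin 2 → ℝ) (x : ℝ) :
    Matrix (Fin 2) (Fin 2) ℝ :=
  OmegaR p q x + ((Real.exp t - 1) / theta t h x) •
    (BmatR * Matrix.vecMulVec (h x) (h x) - Matrix.vecMulVec (h x) (h x) * BmatR)

/-- `h̃(x) = (e^{t/2}/θ(x))·h(x)`. -/
def htilde (t : ℝ) (h : ℝ → Fin 2 → ℝ) (x : ℝ) : Fin 2 → ℝ :=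
  (Real.exp (t / 2) / theta t h x) • h x

lemma aux_partB (p q : ℝ → ℝ) (t : ℝ) (h : ℝ → Fin 2 → ℝ) (x : ℝ) :
    OmegaPert p q t h x - OmegaR p q x =
      ((Real.exp t - 1) / theta t h x * (2 * h x 0 * h x 1)) • sigma2R +
      ((Real.exp t - 1) / theta t h x * ((h x 1) ^ 2 - (h x 0) ^ 2)) • sigma3R := by
  ext i j
  fin_cases i <;> fin_cases j <;>
    simp [OmegaPert, OmegaR, BmatR, sigma2R, sigma3R, Matrix.mul_apply, Fin.sum_univ_two,
      Matrix.vecMulVec_apply, Matrix.vecMul, dotProduct] <;> ring_nf <;> simp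

lemma aux_sigma_entries (a b : ℝ) :
    a • sigma2R + b • sigma3R = !![a, b; b, -a] := by
  ext i j
  fin_cases i <;> fin_cases j <;> simp [sigma2R, sigma3R]

/-- The one-norming-constant perturbation of a canonical Dirac
potential: if `h` is a normalized solution of `B h' + Ω h = λ h`, then `θ` is bounded
below by `min(1, eᵗ) > 0`, `Ω_t - Ω` is again a canonical potential matrix,
`h̃ = (e^{t/2}/θ)·h` is an absolutely continuous solution of `B h̃' + Ω_t h̃ = λ h̃`,
`h̃` is normalized, and `∫₀^π ‖Ω_t - Ω‖ = |t|`. -/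
theorem stmt_17 (p q : ℝ → ℝ)
    (hp : IntegrableOn p (Icc 0 Real.pi)) (hq : IntegrableOn q (Icc 0 Real.pi))
    (lam t : ℝ) (h h' : ℝ → Fin 2 → ℝ)
    (hh'int : IntegrableOn h' (Icc 0 Real.pi))
    (hhAC : ∀ x ∈ Icc (0:ℝ) Real.pi, h x = h 0 + ∫ s in (0:ℝ)..x, h' s)
    (hheq : ∀ᵐ x ∂(volume.restrict (Ioc 0 Real.pi)),
      BmatR.mulVec (h' x) + (OmegaR p q x).mulVec (h x) = lam • h x)
    (hnorm : (∫ x in (0:ℝ)..Real.pi, ((h x 0) ^ 2 + (h x 1) ^ 2)) = 1) :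
    (0 < min 1 (Real.exp t) ∧
      ∀ x ∈ Icc (0:ℝ) Real.pi, min 1 (Real.exp t) ≤ theta t h x) ∧
    (∀ x : ℝ, OmegaPert p q t h x - OmegaR p q x =
      ((Real.exp t - 1) / theta t h x * (2 * h x 0 * h x 1)) • sigma2R +
      ((Real.exp t - 1) / theta t h x * ((h x 1) ^ 2 - (h x 0) ^ 2)) • sigma3R) ∧
    (∃ g : ℝ → Fin 2 → ℝ,
      IntegrableOn g (Icc 0 Real.pi) ∧
      (∀ x ∈ Icc (0:ℝ) Real.pi,
        htilde t h x = htilde t h 0 + ∫ s in (0:ℝ)..x, g s) ∧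
      (∀ᵐ x ∂(volume.restrict (Ioc 0 Real.pi)),
        BmatR.mulVec (g x) + (OmegaPert p q t h x).mulVec (htilde t h x) =
          lam • htilde t h x)) ∧
    ((∫ x in (0:ℝ)..Real.pi, ((htilde t h x 0) ^ 2 + (htilde t h x 1) ^ 2)) = 1) ∧
    ((∫ x in (0:ℝ)..Real.pi, matNormR (OmegaPert p q t h x - OmegaR p q x)) = |t|) := by
  have hπ : (0:ℝ) ≤ Real.pi := Real.pi_pos.le
  -- the continuous version of h
  set proj : ℝ → ℝ := fun s => max 0 (min s Real.pi) with hproj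
  have hprojmem : ∀ s, proj s ∈ Icc (0:ℝ) Real.pi := fun s =>
    ⟨le_max_left _ _, max_le (hπ) (min_le_right _ _)⟩
  have hprojeq : ∀ s ∈ Icc (0:ℝ) Real.pi, proj s = s := fun s hs => by
    simp only [hproj]
    rw [min_eq_left hs.2, max_eq_right hs.1]
  have hprojcont : Continuous proj := continuous_const.max (continuous_id.min continuous_const)
  set hbar : ℝ → Fin 2 → ℝ := fun s => h 0 + ∫ u in (0:ℝ)..(proj s), h' u with hhbar
  have hbar_eq : ∀ s ∈ Icc (0:ℝ) Real.pi, hbar s = h s := fun s hs => by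
    simp only [hhbar]
    rw [hprojeq s hs, ← hhAC s hs]
  have hprimcont : ContinuousOn (fun y => ∫ u in (0:ℝ)..y, h' u) (Icc 0 Real.pi) := by
    have h2 := intervalIntegral.continuousOn_primitive_interval
      (a := (0:ℝ)) (b := Real.pi) (f := h')
      (by rw [uIcc_of_le hπ]; exact hh'int)
    rwa [uIcc_of_le hπ] at h2
  have hbarcont : Continuous hbar :=
    continuous_const.add (hprimcont.comp_continuous hprojcont hprojmem)
  set r : ℝ → ℝ := fun s => (hbar s 0) ^ 2 + (hbar s 1) ^ 2 with hr
  have rcont : Continuous r := by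
    have h0 : Continuous fun s => hbar s 0 := (continuous_apply 0).comp hbarcont
    have h1 : Continuous fun s => hbar s 1 := (continuous_apply 1).comp hbarcont
    exact (h0.pow 2).add (h1.pow 2)
  have rnn : ∀ s, 0 ≤ r s := fun s => by positivity
  have rh : ∀ s ∈ Icc (0:ℝ) Real.pi, r s = (h s 0) ^ 2 + (h s 1) ^ 2 := fun s hs => by
    simp only [hr, hbar_eq s hs]
  set φ : ℝ → ℝ := fun y => ∫ u in (0:ℝ)..y, r u with hφ
  have hφd : ∀ y, HasDerivAt φ (r y) y := fun y =>
    (rcont.integral_hasStrictDerivAt 0 y).hasDerivAt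
  set θb : ℝ → ℝ := fun y => 1 + (Real.exp t - 1) * φ y with hθb
  have hθd : ∀ y, HasDerivAt θb ((Real.exp t - 1) * r y) y := fun y =>
    ((hφd y).const_mul (Real.exp t - 1)).const_add 1
  have θbc : Continuous θb :=
    continuous_const.add (continuous_const.mul
      (continuous_iff_continuousAt.2 fun y => (hφd y).continuousAt))
  have theta_eq : ∀ x ∈ Icc (0:ℝ) Real.pi, theta t h x = θb x := by
    intro x hx
    simp only [theta, hθb, hφ]
    congr 1
    congr 1
    refine intervalIntegral.integral_congr fun s hs => ?_
    rw [uIcc_of_le hx.1] at hs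
    exact (rh s ⟨hs.1, hs.2.trans hx.2⟩).symm
  have hφ0 : φ 0 = 0 := intervalIntegral.integral_same
  have hφπ : φ Real.pi = 1 := by
    rw [hφ, ← hnorm]
    refine intervalIntegral.integral_congr fun s hs => ?_
    rw [uIcc_of_le hπ] at hs
    exact rh s hs
  have rintInt : ∀ a b : ℝ, IntervalIntegrable r volume a b := fun a b =>
    rcont.intervalIntegrable a b
  have hφmem : ∀ x ∈ Icc (0:ℝ) Real.pi, 0 ≤ φ x ∧ φ x ≤ 1 := by
    intro x hx
    constructor
    · exact intervalIntegral.integral_nonneg hx.1 fun u _ => rnn u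
    · have hadd : φ x + ∫ u in x..Real.pi, r u = φ Real.pi :=
        intervalIntegral.integral_add_adjacent_intervals (rintInt 0 x) (rintInt x Real.pi)
      have hnn : 0 ≤ ∫ u in x..Real.pi, r u :=
        intervalIntegral.integral_nonneg hx.2 fun u _ => rnn u
      rw [hφπ] at hadd
      linarith
  have hminpos : 0 < min 1 (Real.exp t) := lt_min one_pos (Real.exp_pos t)
  have θbge : ∀ x ∈ Icc (0:ℝ) Real.pi, min 1 (Real.exp t) ≤ θb x := by
    intro x hx
    obtain ⟨h0, h1⟩ := hφmem x hx
    simp only [hθb]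
    rcases min_cases 1 (Real.exp t) with ⟨hm, hcmp⟩ | ⟨hm, hcmp⟩ <;> rw [hm] <;> nlinarith
  have θbpos : ∀ x ∈ Icc (0:ℝ) Real.pi, 0 < θb x := fun x hx =>
    lt_of_lt_of_le hminpos (θbge x hx)
  have θbne : ∀ x ∈ Icc (0:ℝ) Real.pi, θb x ≠ 0 := fun x hx => (θbpos x hx).ne'
  have θb0 : θb 0 = 1 := by simp [hθb, hφ0]
  have θbπ : θb Real.pi = Real.exp t := by
    show 1 + (Real.exp t - 1) * φ Real.pi = Real.exp t
    rw [hφπ]; ring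
  refine ⟨⟨hminpos, fun x hx => (theta_eq x hx).symm ▸ θbge x hx⟩, aux_partB p q t h, ?_, ?_, ?_⟩
  · -- part (c)
    set cc : ℝ → ℝ := fun y => Real.exp (t / 2) / θb y with hcc
    set cc' : ℝ → ℝ := fun y => -(Real.exp (t / 2) * ((Real.exp t - 1) * r y)) / θb y ^ 2 with hcc'
    have hccd : ∀ y ∈ Icc (0:ℝ) Real.pi, HasDerivAt cc (cc' y) y := by
      intro y hy
      have hd := (hasDerivAt_const y (Real.exp (t / 2))).div (hθd y) (θbne y hy)
      convert hd using 1
      · rfl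
      · rfl
      · rfl
      simp only [hcc']
      ring
    have hcc'cont : ContinuousOn cc' (Icc 0 Real.pi) := by
      refine ContinuousOn.div ?_ ((θbc.pow 2).continuousOn)
        (fun y hy => pow_ne_zero 2 (θbne y hy))
      exact ((continuous_const.mul (continuous_const.mul rcont)).neg).continuousOn
    have hcccont : ContinuousOn cc (Icc 0 Real.pi) := fun y hy =>
      (hccd y hy).continuousAt.continuousWithinAt
    have hth0 : theta t h 0 = 1 := by simp [theta]
    refine ⟨fun s => cc' s • hbar s + cc s • h' s, ?_, ?_, ?_⟩
    · have i1 : IntegrableOn (fun s => cc' s • hbar s) (Icc 0 Real.pi) volume :=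
        (hcc'cont.smul hbarcont.continuousOn).integrableOn_compact isCompact_Icc
      have i2 : IntegrableOn (fun s => cc s • h' s) (Icc 0 Real.pi) volume :=
        (integrableOn_Icc_iff_integrableOn_Ioc).2
          (aux_smul_integrableOn hcccont (hh'int.mono_set Ioc_subset_Icc_self))
      exact i1.add i2
    · intro x hx
      have hsub : Icc (0:ℝ) x ⊆ Icc 0 Real.pi := Icc_subset_Icc le_rfl hx.2
      have hcc0 : cc 0 = Real.exp (t / 2) := by
        simp only [hcc, θb0, div_one]
      have hI1 : IntervalIntegrable (fun s => cc' s • h 0) volume 0 x := by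
        apply ContinuousOn.intervalIntegrable
        rw [uIcc_of_le hx.1]
        exact (hcc'cont.mono hsub).smul continuousOn_const
      have hI2 : IntervalIntegrable
          (fun s => cc' s • (∫ u in (0:ℝ)..s, h' u) + cc s • h' s) volume 0 x := by
        apply IntervalIntegrable.add
        · apply ContinuousOn.intervalIntegrable
          rw [uIcc_of_le hx.1]
          exact (hcc'cont.mono hsub).smul (hprimcont.mono hsub)
        · rw [intervalIntegrable_iff_integrableOn_Ioc_of_le hx.1]
          exact aux_smul_integrableOn (hcccont.mono hsub)
            (hh'int.mono_set fun u hu => ⟨hu.1.le, hu.2.trans hx.2⟩)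
      have hEq : EqOn (fun s => cc' s • hbar s + cc s • h' s)
          (fun s => cc' s • h 0 + (cc' s • (∫ u in (0:ℝ)..s, h' u) + cc s • h' s))
          (uIcc 0 x) := by
        intro s hs
        rw [uIcc_of_le hx.1] at hs
        have hb : hbar s = h 0 + ∫ u in (0:ℝ)..s, h' u := by
          simp only [hhbar]; rw [hprojeq s (hsub hs)]
        simp only [hb, smul_add]
        rw [add_assoc]
      have hfta : ∫ s in (0:ℝ)..x, cc' s = cc x - cc 0 := by
        refine intervalIntegral.integral_eq_sub_of_hasDerivAt (fun s hs => ?_) ?_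
        · rw [uIcc_of_le hx.1] at hs; exact hccd s (hsub hs)
        · apply ContinuousOn.intervalIntegrable; rw [uIcc_of_le hx.1]
          exact hcc'cont.mono hsub
      have hparts := aux_parts_primitive hx.1 (hh'int.mono_set hsub)
        (fun s hs => hccd s (hsub hs)) (hcc'cont.mono hsub)
        (fun s => ∫ u in (0:ℝ)..s, h' u) (fun s => rfl)
      rw [intervalIntegral.integral_congr hEq, intervalIntegral.integral_add hI1 hI2,
        intervalIntegral.integral_smul_const, hfta, hparts]
      have h1 : htilde t h x = cc x • (h 0 + ∫ u in (0:ℝ)..x, h' u) := by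
        simp only [htilde, theta_eq x hx, hcc]
        rw [← hhAC x hx]
      have h2 : htilde t h 0 = Real.exp (t / 2) • h 0 := by
        simp only [htilde, hth0, div_one]
      rw [h1, h2, hcc0, smul_add, sub_smul]
      abel
    · filter_upwards [hheq, ae_restrict_mem measurableSet_Ioc] with x hxe hmem
      have hIcc : x ∈ Icc (0:ℝ) Real.pi := ⟨hmem.1.le, hmem.2⟩
      have hth : theta t h x = θb x := theta_eq x hIcc
      have hgx : cc' x • hbar x + cc x • h' x
          = (-(Real.exp (t / 2) * ((Real.exp t - 1) * ((h x 0) ^ 2 + (h x 1) ^ 2))) / θb x ^ 2)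
              • h x + (Real.exp (t / 2) / θb x) • h' x := by
        simp only [hcc', hcc, hbar_eq x hIcc]
        rw [rh x hIcc]
      have e0 := congrFun hxe 0
      have e1 := congrFun hxe 1
      simp only [BmatR, OmegaR, Matrix.mulVec, dotProduct, Fin.sum_univ_two, Pi.add_apply,
        Pi.smul_apply, smul_eq_mul, Matrix.cons_val_zero, Matrix.cons_val_one, Matrix.head_cons,
        Matrix.cons_val', Matrix.empty_val', Matrix.cons_val_fin_one, Matrix.head_fin_const,
        Matrix.of_apply, Fin.isValue, Fin.mk_one, Fin.mk_zero] at e0 e1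
      rw [hgx]
      funext i
      fin_cases i
      · simp only [OmegaPert, htilde, hth, BmatR, OmegaR, Matrix.mulVec, dotProduct,
          Fin.sum_univ_two, Pi.add_apply, Pi.smul_apply, smul_eq_mul, Matrix.cons_val_zero,
          Matrix.cons_val_one, Matrix.head_cons, Matrix.cons_val', Matrix.empty_val',
          Matrix.cons_val_fin_one, Matrix.head_fin_const, Matrix.add_apply, Matrix.smul_apply,
          Matrix.sub_apply, Matrix.mul_apply, Matrix.vecMulVec_apply, Matrix.vecMul,
          Matrix.of_apply, Fin.isValue, Fin.mk_one, Fin.mk_zero]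
        generalize θb x = θ
        linear_combination (Real.exp (t / 2) / θ) * e0
      · simp only [OmegaPert, htilde, hth, BmatR, OmegaR, Matrix.mulVec, dotProduct,
          Fin.sum_univ_two, Pi.add_apply, Pi.smul_apply, smul_eq_mul, Matrix.cons_val_zero,
          Matrix.cons_val_one, Matrix.head_cons, Matrix.cons_val', Matrix.empty_val',
          Matrix.cons_val_fin_one, Matrix.head_fin_const, Matrix.add_apply, Matrix.smul_apply,
          Matrix.sub_apply, Matrix.mul_apply, Matrix.vecMulVec_apply, Matrix.vecMul,
          Matrix.of_apply, Fin.isValue, Fin.mk_one, Fin.mk_zero]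
        generalize θb x = θ
        linear_combination (Real.exp (t / 2) / θ) * e1
  · -- part (d)
    have hEE : Real.exp (t / 2) * Real.exp (t / 2) = Real.exp t := by
      rw [← Real.exp_add]; norm_num
    have hcongr : EqOn (fun x => (htilde t h x 0) ^ 2 + (htilde t h x 1) ^ 2)
        (fun x => Real.exp t * r x / θb x ^ 2) (uIcc 0 Real.pi) := by
      intro x hx
      rw [uIcc_of_le hπ] at hx
      simp only [htilde, theta_eq x hx, Pi.smul_apply, smul_eq_mul]
      rw [rh x hx]
      obtain ⟨θ, hθeq⟩ : ∃ θ, θb x = θ := ⟨_, rfl⟩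
      rw [hθeq]
      linear_combination (((h x 0) ^ 2 + (h x 1) ^ 2) / θ ^ 2) * hEE
    rw [intervalIntegral.integral_congr hcongr]
    by_cases ht : t = 0
    · subst ht
      have : EqOn (fun x => Real.exp 0 * r x / θb x ^ 2) r (uIcc 0 Real.pi) := by
        intro x hx
        simp only [Real.exp_zero, hθb]
        norm_num
      rw [intervalIntegral.integral_congr this]
      rw [hφ] at hφπ
      exact hφπ
    · have hKne : Real.exp t - 1 ≠ 0 :=
        sub_ne_zero.2 fun hh => ht ((Real.exp_eq_one_iff t).1 hh)
      set ψ : ℝ → ℝ := fun y => -Real.exp t / (Real.exp t - 1) * (θb y)⁻¹ with hψ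
      have hψd : ∀ y ∈ Icc (0:ℝ) Real.pi, HasDerivAt ψ (Real.exp t * r y / θb y ^ 2) y := by
        intro y hy
        have hd := ((hθd y).inv (θbne y hy)).const_mul (-Real.exp t / (Real.exp t - 1))
        convert hd using 1
        · rfl
        · rfl
        · rfl
        have hne := θbne y hy
        obtain ⟨θ, hθeq⟩ : ∃ θ, θb y = θ := ⟨_, rfl⟩
        rw [hθeq] at hne ⊢
        field_simp
      have hint : IntervalIntegrable (fun y => Real.exp t * r y / θb y ^ 2) volume 0 Real.pi := by
        apply ContinuousOn.intervalIntegrable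
        rw [uIcc_of_le hπ]
        exact (continuous_const.mul rcont).continuousOn.div ((θbc.pow 2).continuousOn)
          (fun y hy => pow_ne_zero 2 (θbne y hy))
      rw [intervalIntegral.integral_eq_sub_of_hasDerivAt
        (fun y hy => hψd y (by rwa [uIcc_of_le hπ] at hy)) hint]
      simp only [hψ, θbπ, θb0, inv_one]
      field_simp
      ring
  · -- part (e)
    have hcongr : EqOn (fun x => matNormR (OmegaPert p q t h x - OmegaR p q x))
        (fun x => |Real.exp t - 1| * r x / θb x) (uIcc 0 Real.pi) := by
      intro x hx
      rw [uIcc_of_le hπ] at hx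
      have hb := aux_partB p q t h x
      simp only [hb, aux_sigma_entries, matNormR, aux_opnorm_special]
      have hsq : ((Real.exp t - 1) / theta t h x * (2 * h x 0 * h x 1)) ^ 2 +
          ((Real.exp t - 1) / theta t h x * ((h x 1) ^ 2 - (h x 0) ^ 2)) ^ 2 =
          ((Real.exp t - 1) / θb x * ((h x 0) ^ 2 + (h x 1) ^ 2)) ^ 2 := by
        rw [theta_eq x hx]; ring
      rw [hsq, Real.sqrt_sq_eq_abs, abs_mul, abs_div, abs_of_pos (θbpos x hx),
        abs_of_nonneg (show (0:ℝ) ≤ h x 0 ^ 2 + h x 1 ^ 2 by positivity), rh x hx]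
      ring
    rw [intervalIntegral.integral_congr hcongr]
    by_cases ht : t = 0
    · subst ht
      simp
    · have hKne : Real.exp t - 1 ≠ 0 :=
        sub_ne_zero.2 fun hh => ht ((Real.exp_eq_one_iff t).1 hh)
      set ψ : ℝ → ℝ := fun y => (Real.exp t - 1)⁻¹ * Real.log (θb y) with hψ
      have hψd : ∀ y ∈ Icc (0:ℝ) Real.pi, HasDerivAt ψ (r y / θb y) y := by
        intro y hy
        have hd := ((hθd y).log (θbne y hy)).const_mul (Real.exp t - 1)⁻¹
        convert hd using 1
        · rfl
        · rfl
        have hne := θbne y hy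
        obtain ⟨θ, hθeq⟩ : ∃ θ, θb y = θ := ⟨_, rfl⟩
        rw [hθeq] at hne ⊢
        field_simp
      have heq2 : EqOn (fun x => |Real.exp t - 1| * r x / θb x)
          (fun x => |Real.exp t - 1| * (r x / θb x)) (uIcc 0 Real.pi) := by
        intro x hx; simp only [mul_div_assoc]
      rw [intervalIntegral.integral_congr heq2, intervalIntegral.integral_const_mul]
      have hint : IntervalIntegrable (fun y => r y / θb y) volume 0 Real.pi := by
        apply ContinuousOn.intervalIntegrable
        rw [uIcc_of_le hπ]
        exact rcont.continuousOn.div θbc.continuousOn (fun y hy => θbne y hy)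
      rw [intervalIntegral.integral_eq_sub_of_hasDerivAt
        (fun y hy => hψd y (by rwa [uIcc_of_le hπ] at hy)) hint]
      simp only [hψ, θbπ, θb0, Real.log_one, Real.log_exp, mul_zero, sub_zero]
      rcases lt_trichotomy t 0 with hlt | hzz | hgt
      · have hexp : Real.exp t < 1 := by
          rw [← Real.exp_zero]; exact Real.exp_lt_exp.2 hlt
        rw [abs_of_neg (by linarith), abs_of_neg hlt]
        field_simp
      · exact absurd hzz ht
      · have hexp : 1 < Real.exp t := by
          rw [← Real.exp_zero]; exact Real.exp_lt_exp.2 hgt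
        rw [abs_of_pos (by linarith), abs_of_pos hgt]
        field_simp
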